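/- As n → ∞, L(1, 2, …, n) ≍ L[n², n]; that is, there exist constants 0 < a ≤ b such that a · L[n², n] ≤ ln|T(1, 2, …, n)| ≤ b · L[n², n] for all large n. -/

import Mathlib

open Filter

/-- A Kostant picture of height `η`. -/
def IsKostant {w : ℕ} (η : Fin w → ℕ) (c : Fin w → Fin w → ℕ) : Prop :=
  (∀ i j : Fin w, j < i → c i j = 0) ∧
  ∀ m : Fin w, (∑ i : Fin w, ∑ j : Fin w, (if i ≤ m ∧ m ≤ j then c i j else 0)) = η m

/-- Kostant's partition function. -/
noncomputable def KPF {w : ℕ} (η : Fin w → ℕ) : ℕ :=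
  Set.ncard {c : Fin w → Fin w → ℕ | IsKostant η c}

/-- `L[h,w] = ln KPF[(h,…,h)]` for the constant tuple of length `w`. -/
noncomputable def Lbox (h w : ℕ) : ℝ := Real.log (KPF (fun _ : Fin w => h))

/-- A generalized Tesler matrix with hook sum vector `h`. -/
def IsTesler {n : ℕ} (h : Fin n → ℤ) (A : Fin n → Fin n → ℕ) : Prop :=
  (∀ i j : Fin n, j < i → A i j = 0) ∧
  ∀ k : Fin n, (∑ i : Fin n, if k ≤ i then (A k i : ℤ) else 0)
    - (∑ i : Fin n, if i < k then (A i k : ℤ) else 0) = h k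

/-- `L(h) = ln |T(h)|`. -/
noncomputable def LTes {n : ℕ} (h : Fin n → ℤ) : ℝ :=
  Real.log (Set.ncard {A : Fin n → Fin n → ℕ | IsTesler h A})


open Finset

/-- geometric sum bound -/
lemma mygeom (r : ℝ) (h0 : 0 ≤ r) (h1 : r < 1) (M : ℕ) :
    ∑ t ∈ range M, r ^ t ≤ (1 - r)⁻¹ := by
  rw [geom_sum_eq h1.ne, div_le_iff_of_neg (by linarith)]
  have hpow : 0 ≤ r ^ M := pow_nonneg h0 M
  have hne : (1 - r) ≠ 0 := by intro h; rw [sub_eq_zero] at h; exact h1.ne h.symm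
  have : (1 - r)⁻¹ * (r - 1) = -1 := by field_simp; ring
  linarith

/-- Master counting bound via exponential moments. -/
lemma master_count {ι : Type*} [Fintype ι] (w : ι → ℕ) (hw : ∀ i, 1 ≤ w i) (N : ℕ)
    (s : ℝ) (hs : 0 < s) :
    ((Set.ncard {x : ι → ℕ | ∑ i, w i * x i ≤ N}) : ℝ)
      ≤ Real.exp (s * N) * ∏ i, (1 - Real.exp (-(s * w i)))⁻¹ := by
  classical
  set S : Set (ι → ℕ) := {x : ι → ℕ | ∑ i, w i * x i ≤ N} with hS
  have hbound : ∀ x ∈ S, ∀ i, x i < N + 1 := by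
    intro x hx i
    have h1 : w i * x i ≤ N := le_trans (Finset.single_le_sum (f := fun i => w i * x i)
      (fun i _ => Nat.zero_le _) (mem_univ i)) hx
    have := hw i
    calc x i ≤ w i * x i := Nat.le_mul_of_pos_left _ (by omega)
      _ < N + 1 := by omega
  set B : Finset (ι → ℕ) := Fintype.piFinset (fun _ => Finset.range (N + 1)) with hB
  have hSB : S ⊆ ↑B := by
    intro x hx
    simp only [hB, Finset.coe_sort_coe, Finset.mem_coe, Fintype.mem_piFinset, Finset.mem_range]
    exact hbound x hx
  have hfin : S.Finite := Set.Finite.subset (B.finite_toSet) hSB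
  rw [Set.ncard_eq_toFinset_card _ hfin]
  set F : Finset (ι → ℕ) := hfin.toFinset with hF
  have hFB : F ⊆ B := by
    intro x hx
    rw [hF, Set.Finite.mem_toFinset] at hx
    exact hSB hx
  have step1 : (F.card : ℝ) ≤ ∑ x ∈ F, Real.exp (s * ((N : ℝ) - ∑ i, (w i : ℝ) * x i)) := by
    rw [Finset.card_eq_sum_ones, Nat.cast_sum]
    apply Finset.sum_le_sum
    intro x hx
    rw [hF, Set.Finite.mem_toFinset] at hx
    have hxN : (∑ i, (w i : ℝ) * (x i : ℝ)) ≤ (N : ℝ) := by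
      have := hx
      rw [hS, Set.mem_setOf_eq] at this
      calc (∑ i, (w i : ℝ) * (x i : ℝ)) = ((∑ i, w i * x i : ℕ) : ℝ) := by push_cast; ring
        _ ≤ (N : ℝ) := by exact_mod_cast this
    simpa using Real.one_le_exp (by nlinarith)
  have step2 : ∑ x ∈ F, Real.exp (s * ((N : ℝ) - ∑ i, (w i : ℝ) * x i))
      ≤ ∑ x ∈ B, Real.exp (s * ((N : ℝ) - ∑ i, (w i : ℝ) * x i)) :=
    Finset.sum_le_sum_of_subset_of_nonneg hFB (fun _ _ _ => (Real.exp_pos _).le)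
  have key : ∀ x : ι → ℕ, s * ((N:ℝ) - ∑ i, (w i:ℝ) * x i)
      = s * N + ∑ i, (x i : ℝ) * (-(s * w i)) := by
    intro x
    have h1 : ∑ i, (x i : ℝ) * (-(s * w i)) = - ∑ i, s * ((w i : ℝ) * x i) := by
      rw [← Finset.sum_neg_distrib]; exact Finset.sum_congr rfl (fun i _ => by ring)
    rw [h1, ← Finset.mul_sum]; ring
  have step3 : ∑ x ∈ B, Real.exp (s * ((N : ℝ) - ∑ i, (w i : ℝ) * x i))
      = Real.exp (s * N) * ∏ i, ∑ t ∈ range (N + 1), Real.exp (-(s * w i)) ^ t := by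
    have e1 : ∀ x : ι → ℕ, Real.exp (s * ((N : ℝ) - ∑ i, (w i : ℝ) * x i))
        = Real.exp (s * N) * ∏ i, Real.exp (-(s * w i)) ^ (x i) := by
      intro x
      rw [key x, Real.exp_add, Real.exp_sum]
      congr 1
      exact Finset.prod_congr rfl (fun i _ => Real.exp_nat_mul _ _)
    rw [Finset.sum_congr rfl (fun x _ => e1 x), ← Finset.mul_sum]
    congr 1
    rw [hB, ← Finset.prod_univ_sum]
  have step4 : (∏ i, ∑ t ∈ range (N + 1), Real.exp (-(s * w i)) ^ t)
      ≤ ∏ i, (1 - Real.exp (-(s * (w i:ℝ))))⁻¹ := by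
    apply Finset.prod_le_prod
    · intro i _
      exact Finset.sum_nonneg (fun t _ => pow_nonneg (Real.exp_nonneg _) t)
    · intro i _
      apply mygeom _ (Real.exp_nonneg _)
      apply Real.exp_lt_one_iff.2
      have h1 : (1:ℝ) ≤ (w i : ℝ) := by exact_mod_cast hw i
      nlinarith
  calc (F.card : ℝ) ≤ ∑ x ∈ B, Real.exp (s * ((N : ℝ) - ∑ i, (w i : ℝ) * x i)) :=
        le_trans step1 step2
    _ = Real.exp (s * N) * ∏ i, ∑ t ∈ range (N + 1), Real.exp (-(s * w i)) ^ t := step3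
    _ ≤ Real.exp (s * N) * ∏ i, (1 - Real.exp (-(s * (w i:ℝ))))⁻¹ :=
        mul_le_mul_of_nonneg_left step4 (Real.exp_nonneg _)
lemma inv_one_sub_exp_le (n w : ℕ) (h1 : 1 ≤ w) (h2 : w ≤ n) :
    (1 - Real.exp (-((1/(n:ℝ)) * w)))⁻¹ ≤ 2 * n / w := by
  have hn : (0:ℝ) < n := by exact_mod_cast lt_of_lt_of_le h1 h2
  have hw : (0:ℝ) < w := by exact_mod_cast h1
  set u : ℝ := (1/(n:ℝ)) * w with hu
  have hu0 : 0 < u := by positivity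
  have hu1 : u ≤ 1 := by
    rw [hu, one_div, inv_mul_eq_div]
    exact (div_le_one hn).2 (by exact_mod_cast h2)
  have he : Real.exp (-u) ≤ 1/(1+u) := by
    rw [le_div_iff₀ (show (0:ℝ) < 1 + u by linarith)]
    have h3 : u + 1 ≤ Real.exp u := Real.add_one_le_exp u
    have h4 : Real.exp (-u) * Real.exp u = 1 := by
      rw [← Real.exp_add]; simp
    nlinarith [Real.exp_pos (-u), Real.exp_pos u]
  have hlow : u/2 ≤ 1 - Real.exp (-u) := by
    have : 1 - 1/(1+u) = u/(1+u) := by field_simp; ring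
    have h5 : u/(1+u) ≥ u/2 := by
      apply div_le_div_of_nonneg_left hu0.le (by linarith) (by linarith)
    linarith
  have hpos : 0 < 1 - Real.exp (-u) := lt_of_lt_of_le (by positivity) hlow
  have hwu : (w:ℝ)/(2*n) = u/2 := by
    rw [hu]; field_simp
  rw [show (2*(n:ℝ)/w) = ((w:ℝ)/(2*n))⁻¹ by rw [inv_div]]
  apply inv_anti₀ (by positivity)
  rw [hwu]; exact hlow

lemma pow_le_exp_mul_factorial (n : ℕ) : (n:ℝ)^n ≤ Real.exp n * n.factorial := by
  have h := Real.sum_le_exp_of_nonneg (x := (n:ℝ)) (by positivity) (n+1)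
  have h2 : (n:ℝ)^n / n.factorial ≤ Real.exp n := by
    refine le_trans ?_ h
    refine Finset.single_le_sum (f := fun i => (n:ℝ)^i / i.factorial) ?_ (Finset.self_mem_range_succ n)
    intro i _
    positivity
  rw [div_le_iff₀ (by positivity)] at h2
  linarith

lemma log_factorial_ge (n : ℕ) (hn : 1 ≤ n) :
    (n:ℝ) * Real.log n - n ≤ Real.log (n.factorial) := by
  have h := pow_le_exp_mul_factorial n
  have h2 := Real.log_le_log (by positivity) h
  rw [Real.log_pow, Real.log_mul (Real.exp_ne_zero _) (by exact_mod_cast n.factorial_pos.ne')] at h2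
  rw [Real.log_exp] at h2
  linarith

lemma sum_log_le (n : ℕ) (hn : 1 ≤ n) :
    ∑ m ∈ Icc 1 n, Real.log (2 * n / m) ≤ 2 * n := by
  have hlogfac : ∑ m ∈ Icc 1 n, Real.log (m:ℝ) = Real.log (n.factorial) := by
    rw [← Real.log_prod]
    · congr 1
      rw [← Nat.cast_prod]
      congr 1
      rw [show Icc 1 n = Ico 1 (n+1) by ext x; rw [Finset.mem_Icc, Finset.mem_Ico]; omega]
      exact Finset.prod_Ico_id_eq_factorial n
    · intro m hm
      rw [Finset.mem_Icc] at hm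
      exact_mod_cast (by omega : m ≠ 0)
  have hsplit : ∀ m ∈ Icc 1 n, Real.log (2 * n / m) = Real.log (2*(n:ℝ)) - Real.log m := by
    intro m hm
    rw [Finset.mem_Icc] at hm
    rw [Real.log_div (by positivity) (by exact_mod_cast (by omega : m ≠ 0))]
  rw [Finset.sum_congr rfl hsplit, Finset.sum_sub_distrib, hlogfac, Finset.sum_const,
    Nat.card_Icc]
  simp only [nsmul_eq_mul]
  have h1 := log_factorial_ge n hn
  have h2 : Real.log (2*(n:ℝ)) = Real.log 2 + Real.log n := by
    rw [Real.log_mul (by norm_num) (by exact_mod_cast (by omega : n ≠ 0))]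
  have h3 : Real.log 2 ≤ 1 := by
    have := Real.log_le_sub_one_of_pos (by norm_num : (0:ℝ) < 2)
    linarith
  have h4 : (n + 1 - 1 : ℕ) = n := by omega
  rw [h4, h2]
  nlinarith [Real.log_nonneg (by exact_mod_cast hn : (1:ℝ) ≤ (n:ℝ))]

lemma pair_sum_decomp {n : ℕ} {M : Type*} [AddCommMonoid M] (g : Fin n → Fin n → M) :
    ∑ p ∈ univ.filter (fun p : Fin n × Fin n => p.1 ≤ p.2), g p.1 p.2
      = ∑ i : Fin n, ∑ j ∈ univ.filter (fun j => i ≤ j), g i j := by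
  classical
  rw [Finset.sum_filter, Fintype.sum_prod_type]
  exact Finset.sum_congr rfl (fun i _ => by rw [Finset.sum_filter])

section
variable {n : ℕ}

lemma wsum_finite {ι : Type*} [Fintype ι] (w : ι → ℕ) (hw : ∀ i, 1 ≤ w i) (N : ℕ) :
    {x : ι → ℕ | ∑ i, w i * x i ≤ N}.Finite := by
  classical
  apply Set.Finite.subset ((Fintype.piFinset (fun _ : ι => Finset.range (N + 1))).finite_toSet)
  intro x hx
  simp only [Finset.coe_sort_coe, Finset.mem_coe, Fintype.mem_piFinset, Finset.mem_range]
  intro i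
  have h1 : w i * x i ≤ N := le_trans (Finset.single_le_sum (f := fun i => w i * x i)
    (fun i _ => Nat.zero_le _) (mem_univ i)) hx
  have := hw i
  calc x i ≤ w i * x i := Nat.le_mul_of_pos_left _ (by omega)
    _ < N + 1 := by omega

lemma sum_log_pairs_le (hn : 1 ≤ n) (w : Fin n → Fin n → ℕ)
    (hw1 : ∀ i j : Fin n, i ≤ j → 1 ≤ w i j) (hwn : ∀ i j : Fin n, i ≤ j → w i j ≤ n)
    (hinj : ∀ i j₁ j₂ : Fin n, i ≤ j₁ → i ≤ j₂ → w i j₁ = w i j₂ → j₁ = j₂) :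
    ∑ i : Fin n, ∑ j ∈ univ.filter (fun j => i ≤ j), Real.log (2*n / w i j)
      ≤ 2 * n^2 := by
  have hinner : ∀ i : Fin n,
      ∑ j ∈ univ.filter (fun j => i ≤ j), Real.log (2*n / w i j) ≤ 2*n := by
    intro i
    set s := univ.filter (fun j : Fin n => i ≤ j) with hs
    have hmem : ∀ j ∈ s, i ≤ j := by intro j hj; rw [hs, mem_filter] at hj; exact hj.2
    have himg : ∑ j ∈ s, Real.log (2*n / w i j)
        = ∑ m ∈ s.image (w i), Real.log (2*(n:ℝ) / m) := by
      rw [Finset.sum_image]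
      intro x hx y hy hxy
      exact hinj i x y (hmem x hx) (hmem y hy) hxy
    rw [himg]
    have hsub : s.image (w i) ⊆ Icc 1 n := by
      intro m hm
      rw [Finset.mem_image] at hm
      obtain ⟨j, hj, rfl⟩ := hm
      rw [Finset.mem_Icc]
      exact ⟨hw1 i j (hmem j hj), hwn i j (hmem j hj)⟩
    calc ∑ m ∈ s.image (w i), Real.log (2*(n:ℝ) / m)
        ≤ ∑ m ∈ Icc 1 n, Real.log (2*(n:ℝ) / m) := by
          apply Finset.sum_le_sum_of_subset_of_nonneg hsub
          intro m hm _
          rw [Finset.mem_Icc] at hm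
          apply Real.log_nonneg
          rw [le_div_iff₀ (by exact_mod_cast (by omega : 0 < m))]
          have : (m:ℝ) ≤ (n:ℝ) := by exact_mod_cast hm.2
          linarith
      _ ≤ 2*n := sum_log_le n hn
  calc ∑ i : Fin n, ∑ j ∈ univ.filter (fun j => i ≤ j), Real.log (2*n / w i j)
      ≤ ∑ _i : Fin n, (2*(n:ℝ)) := Finset.sum_le_sum (fun i _ => hinner i)
    _ = 2 * n^2 := by simp [Finset.sum_const]; ring

set_option maxHeartbeats 1000000 in
lemma upper_main (hn : 1 ≤ n) (T : Set (Fin n → Fin n → ℕ))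
    (w : Fin n → Fin n → ℕ)
    (hw1 : ∀ i j : Fin n, i ≤ j → 1 ≤ w i j) (hwn : ∀ i j : Fin n, i ≤ j → w i j ≤ n)
    (hinj : ∀ i j₁ j₂ : Fin n, i ≤ j₁ → i ≤ j₂ → w i j₁ = w i j₂ → j₁ = j₂)
    (hzero : ∀ A ∈ T, ∀ i j : Fin n, j < i → A i j = 0)
    (hsum : ∀ A ∈ T, ∑ p ∈ univ.filter (fun p : Fin n × Fin n => p.1 ≤ p.2),
      w p.1 p.2 * A p.1 p.2 ≤ n^3) :
    Real.log (Set.ncard T) ≤ 3 * n^2 := by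
  classical
  have hw'1 : ∀ p : {p : Fin n × Fin n // p.1 ≤ p.2}, 1 ≤ w p.1.1 p.1.2 :=
    fun p => hw1 _ _ p.2
  have hSfin : {x : {p : Fin n × Fin n // p.1 ≤ p.2} → ℕ |
      ∑ i, w i.1.1 i.1.2 * x i ≤ n^3}.Finite :=
    wsum_finite (fun p : {p : Fin n × Fin n // p.1 ≤ p.2} => w p.1.1 p.1.2) hw'1 _
  have hsubty : ∀ (f : (Fin n × Fin n) → ℕ),
      ∑ p ∈ univ.filter (fun p : Fin n × Fin n => p.1 ≤ p.2), w p.1 p.2 * f p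
        = ∑ p : {p : Fin n × Fin n // p.1 ≤ p.2}, w p.1.1 p.1.2 * f p.val := by
    intro f
    exact Finset.sum_subtype _ (by intro x; simp) (fun p : Fin n × Fin n => w p.1 p.2 * f p)
  have hcard : Set.ncard T ≤ Set.ncard {x : {p : Fin n × Fin n // p.1 ≤ p.2} → ℕ |
      ∑ i, w i.1.1 i.1.2 * x i ≤ n^3} := by
    refine Set.ncard_le_ncard_of_injOn (fun A => fun p => A p.1.1 p.1.2) ?_ ?_ hSfin
    · intro A hA
      rw [Set.mem_setOf_eq, ← hsubty (fun p => A p.1 p.2)]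
      exact hsum A hA
    · intro A hA A' hA' hEq
      funext i j
      rcases le_or_gt i j with h | h
      · exact congrFun hEq ⟨(i, j), h⟩
      · rw [hzero A hA i j h, hzero A' hA' i j h]
  have hmc := master_count (fun p : {p : Fin n × Fin n // p.1 ≤ p.2} => w p.1.1 p.1.2)
    hw'1 (n^3) (1/(n:ℝ)) (by positivity)
  have hfac : ∀ p : {p : Fin n × Fin n // p.1 ≤ p.2},
      (1 - Real.exp (-((1/(n:ℝ)) * w p.1.1 p.1.2)))⁻¹ ≤ 2*n / w p.1.1 p.1.2 :=
    fun p => inv_one_sub_exp_le n _ (hw'1 p) (hwn _ _ p.2)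
  have hfacpos : ∀ p : {p : Fin n × Fin n // p.1 ≤ p.2},
      (0:ℝ) < 2*n / w p.1.1 p.1.2 := by
    intro p
    have h1 : (0:ℝ) < w p.1.1 p.1.2 := by exact_mod_cast hw'1 p
    positivity
  have hprod : (∏ p : {p : Fin n × Fin n // p.1 ≤ p.2},
        (1 - Real.exp (-((1/(n:ℝ)) * w p.1.1 p.1.2)))⁻¹)
      ≤ ∏ p : {p : Fin n × Fin n // p.1 ≤ p.2}, (2*(n:ℝ) / w p.1.1 p.1.2) := by
    apply Finset.prod_le_prod
    · intro p _
      apply inv_nonneg.2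
      have : Real.exp (-((1/(n:ℝ)) * w p.1.1 p.1.2)) ≤ 1 := by
        apply Real.exp_le_one_iff.2
        have h1 : (0:ℝ) < w p.1.1 p.1.2 := by exact_mod_cast hw'1 p
        have h2 : (0:ℝ) < n := by exact_mod_cast hn
        rw [neg_nonpos]
        positivity
      linarith
    · exact fun p _ => hfac p
  have hprodpos : (0:ℝ) < ∏ p : {p : Fin n × Fin n // p.1 ≤ p.2},
      (2*(n:ℝ) / w p.1.1 p.1.2) := Finset.prod_pos (fun p _ => hfacpos p)
  have hchain : ((Set.ncard T : ℕ) : ℝ)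
      ≤ Real.exp ((1/(n:ℝ)) * ((n^3 : ℕ) : ℝ)) * ∏ p : {p : Fin n × Fin n // p.1 ≤ p.2},
        (2*(n:ℝ) / w p.1.1 p.1.2) := by
    refine le_trans (by exact_mod_cast hcard) (le_trans hmc ?_)
    exact mul_le_mul_of_nonneg_left hprod (Real.exp_nonneg _)
  rcases Nat.eq_zero_or_pos (Set.ncard T) with h0 | hpos
  · rw [h0, Nat.cast_zero, Real.log_zero]
    positivity
  · have hTpos : (0:ℝ) < (Set.ncard T : ℝ) := by exact_mod_cast hpos
    refine le_trans (Real.log_le_log hTpos hchain) ?_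
    rw [Real.log_mul (Real.exp_ne_zero _) hprodpos.ne', Real.log_exp,
      Real.log_prod (fun p _ => (hfacpos p).ne')]
    have hcast : (1/(n:ℝ)) * ((n^3 : ℕ) : ℝ) = (n:ℝ)^2 := by
      have h2 : (0:ℝ) < n := by exact_mod_cast hn
      push_cast
      field_simp
    have hlogsum : ∑ p : {p : Fin n × Fin n // p.1 ≤ p.2},
        Real.log (2*(n:ℝ) / w p.1.1 p.1.2) ≤ 2*(n:ℝ)^2 := by
      have e1 : ∑ p ∈ univ.filter (fun p : Fin n × Fin n => p.1 ≤ p.2),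
          Real.log (2*(n:ℝ) / w p.1 p.2)
          = ∑ p : {p : Fin n × Fin n // p.1 ≤ p.2}, Real.log (2*(n:ℝ) / w p.1.1 p.1.2) :=
        Finset.sum_subtype _ (by intro x; simp)
          (fun p : Fin n × Fin n => Real.log (2*(n:ℝ) / w p.1 p.2))
      rw [← e1]
      refine le_trans (le_of_eq (pair_sum_decomp
        (fun a b => Real.log (2*(n:ℝ) / (w a b : ℝ))))) ?_
      exact sum_log_pairs_le hn w hw1 hwn hinj
    rw [hcast]
    push_cast
    linarith

end

section part2
open Finset
variable {n : ℕ}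

lemma ncard_ge_of_inj {α β : Type*} [Fintype α] (T : Set β) (hT : T.Finite)
    (f : α → β) (hf : ∀ a, f a ∈ T) (hinj : Function.Injective f) :
    Fintype.card α ≤ T.ncard := by
  have h1 : (Set.univ : Set α).ncard ≤ T.ncard :=
    Set.ncard_le_ncard_of_injOn f (fun a _ => hf a) (hinj.injOn) hT
  rwa [Set.ncard_univ, Nat.card_eq_fintype_card] at h1

lemma finite_of_bdd {M : ℕ} (T : Set (Fin n → Fin n → ℕ))
    (h : ∀ x ∈ T, ∀ i j, x i j ≤ M) : T.Finite := by
  classical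
  apply Set.Finite.subset
    ((Fintype.piFinset (fun _ : Fin n => Fintype.piFinset
      (fun _ : Fin n => Finset.range (M+1)))).finite_toSet)
  intro x hx
  simp only [Finset.coe_sort_coe, Finset.mem_coe, Fintype.mem_piFinset, Finset.mem_range]
  intro i j
  exact Nat.lt_succ_of_le (h x hx i j)

lemma kostant_entry_bound {η : Fin n → ℕ} {c : Fin n → Fin n → ℕ}
    (hc : IsKostant η c) (i j : Fin n) : c i j ≤ η i := by
  rcases le_or_gt i j with h | h
  · have h2 := hc.2 i
    rw [← h2]
    calc c i j = (if i ≤ i ∧ i ≤ j then c i j else 0) := by simp [le_refl, h]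
      _ ≤ ∑ j' : Fin n, (if i ≤ i ∧ i ≤ j' then c i j' else 0) :=
          Finset.single_le_sum (f := fun j' => if i ≤ i ∧ i ≤ j' then c i j' else 0)
            (fun _ _ => by positivity) (mem_univ j)
      _ ≤ ∑ i' : Fin n, ∑ j' : Fin n, (if i' ≤ i ∧ i ≤ j' then c i' j' else 0) :=
          Finset.single_le_sum
            (f := fun i' => ∑ j' : Fin n, (if i' ≤ i ∧ i ≤ j' then c i' j' else 0))
            (fun _ _ => by positivity) (mem_univ i)
  · rw [hc.1 i j h]; exact Nat.zero_le _

lemma kostant_total {η : Fin n → ℕ} {c : Fin n → Fin n → ℕ} (hc : IsKostant η c) :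
    ∑ i : Fin n, ∑ j : Fin n, (Finset.Icc i j).card * c i j = ∑ m : Fin n, η m := by
  classical
  have h1 : ∀ m : Fin n, η m = ∑ i : Fin n, ∑ j : Fin n,
      (if i ≤ m ∧ m ≤ j then c i j else 0) := fun m => (hc.2 m).symm
  calc ∑ i : Fin n, ∑ j : Fin n, (Finset.Icc i j).card * c i j
      = ∑ i : Fin n, ∑ j : Fin n, ∑ m : Fin n, (if i ≤ m ∧ m ≤ j then c i j else 0) := by
        apply Finset.sum_congr rfl; intro i _
        apply Finset.sum_congr rfl; intro j _
        have : ∑ m : Fin n, (if i ≤ m ∧ m ≤ j then c i j else 0)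
            = ∑ m ∈ univ.filter (fun m => i ≤ m ∧ m ≤ j), c i j :=
          (Finset.sum_filter _ _).symm
        rw [this, Finset.sum_const, smul_eq_mul]
        congr 1
        congr 1
        ext m
        simp [Finset.mem_Icc]
    _ = ∑ i : Fin n, ∑ m : Fin n, ∑ j : Fin n, (if i ≤ m ∧ m ≤ j then c i j else 0) :=
        Finset.sum_congr rfl (fun i _ => Finset.sum_comm)
    _ = ∑ m : Fin n, ∑ i : Fin n, ∑ j : Fin n, (if i ≤ m ∧ m ≤ j then c i j else 0) :=
        Finset.sum_comm
    _ = ∑ m : Fin n, η m := by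
        apply Finset.sum_congr rfl; intro m _
        exact (h1 m).symm

lemma kostant_upper (hn : 1 ≤ n) :
    Real.log (KPF (fun _ : Fin n => n^2)) ≤ 3 * n^2 := by
  classical
  apply upper_main hn _ (fun i j => j.1 - i.1 + 1)
  · intro i j _; omega
  · intro i j hij
    have := j.isLt
    omega
  · intro i j₁ j₂ h1 h2 h3
    have e1 : i.1 ≤ j₁.1 := h1
    have e2 : i.1 ≤ j₂.1 := h2
    apply Fin.ext
    omega
  · intro c hc i j hji
    exact hc.1 i j hji
  · intro c hc
    have htot := kostant_total hc
    have hle : ∑ p ∈ univ.filter (fun p : Fin n × Fin n => p.1 ≤ p.2),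
        (p.2.1 - p.1.1 + 1) * c p.1 p.2
        ≤ ∑ p : Fin n × Fin n, (Finset.Icc p.1 p.2).card * c p.1 p.2 := by
      refine le_trans (le_of_eq (Finset.sum_congr rfl ?_))
        (Finset.sum_le_sum_of_subset_of_nonneg (Finset.filter_subset _ _)
          (fun _ _ _ => Nat.zero_le _))
      intro p hp
      rw [Finset.mem_filter] at hp
      have hp2 : p.1 ≤ p.2 := hp.2
      have hcard : (Finset.Icc p.1 p.2).card = p.2.1 + 1 - p.1.1 := Fin.card_Icc p.1 p.2
      rw [hcard]
      have hle' : p.1.1 ≤ p.2.1 := hp2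
      congr 1
      omega
    have he : ∑ p : Fin n × Fin n, (Finset.Icc p.1 p.2).card * c p.1 p.2
        = ∑ m : Fin n, n^2 := by
      rw [Fintype.sum_prod_type]
      exact kostant_total hc
    have : ∑ m : Fin n, n^2 = n * n^2 := by
      rw [Finset.sum_const, smul_eq_mul, Finset.card_univ, Fintype.card_fin]
    have hn3 : n * n^2 = n^3 := by ring
    omega

end part2

section part3
open Finset
variable {n : ℕ}

lemma kostant_lower (q : ℕ) (hq1 : 1 ≤ q) (hq : 2*q ≤ n) :
    2^(q*q) ≤ KPF (fun _ : Fin n => n^2) := by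
  classical
  set cfree : (Fin q → Fin q → Fin 2) → Fin n → Fin n → ℕ :=
    fun E i j => if h : i.1 < q ∧ q ≤ j.1 ∧ j.1 < 2*q then
      (E ⟨i.1, h.1⟩ ⟨j.1 - q, by omega⟩ : ℕ) else 0 with hcfree
  set cov : (Fin q → Fin q → Fin 2) → Fin n → ℕ :=
    fun E m => ∑ i : Fin n, ∑ j : Fin n, (if i ≤ m ∧ m ≤ j then cfree E i j else 0)
      with hcov
  have hfree1 : ∀ E i j, cfree E i j ≤ 1 := by
    intro E i j
    simp only [hcfree]
    split
    · exact Nat.lt_succ_iff.1 (Fin.isLt _)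
    · exact Nat.zero_le _
  have hcovle : ∀ E m, cov E m ≤ n^2 := by
    intro E m
    rw [hcov]
    calc ∑ i : Fin n, ∑ j : Fin n, (if i ≤ m ∧ m ≤ j then cfree E i j else 0)
        ≤ ∑ _i : Fin n, ∑ _j : Fin n, 1 := by
          apply Finset.sum_le_sum; intro i _
          apply Finset.sum_le_sum; intro j _
          split
          · exact hfree1 E i j
          · exact Nat.zero_le _
      _ = n * n := by simp [Finset.sum_const, Finset.card_univ]
      _ = n^2 := (pow_two n).symm
  set F : (Fin q → Fin q → Fin 2) → Fin n → Fin n → ℕ :=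
    fun E i j => cfree E i j + (if i = j then n^2 - cov E i else 0) with hF
  have hmem : ∀ E, IsKostant (fun _ : Fin n => n^2) (F E) := by
    intro E
    constructor
    · intro i j hji
      simp only [hF]
      have h1 : cfree E i j = 0 := by
        simp only [hcfree]
        split
        · exfalso
          have := Fin.lt_def.1 hji
          omega
        · rfl
      rw [h1, if_neg (by intro h; rw [h] at hji; exact lt_irrefl _ hji)]
    · intro m
      have hsplit : ∀ i j : Fin n, (if i ≤ m ∧ m ≤ j then F E i j else 0)
          = (if i ≤ m ∧ m ≤ j then cfree E i j else 0)
            + (if i ≤ m ∧ m ≤ j then (if i = j then n^2 - cov E i else 0) else 0) := by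
        intro i j
        simp only [hF]
        split <;> simp
      have hdiag : ∑ i : Fin n, ∑ j : Fin n,
          (if i ≤ m ∧ m ≤ j then (if i = j then n^2 - cov E i else 0) else 0)
          = n^2 - cov E m := by
        have hinner : ∀ i : Fin n, ∑ j : Fin n,
            (if i ≤ m ∧ m ≤ j then (if i = j then n^2 - cov E i else 0) else 0)
            = if i ≤ m ∧ m ≤ i then n^2 - cov E i else 0 := by
          intro i
          rw [Finset.sum_eq_single i (fun j _ hji => by
            split_ifs with h1 h2
            · exact absurd h2.symm hji
            · rfl
            · rfl) (fun h => absurd (mem_univ i) h)]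
          simp
        rw [Finset.sum_congr rfl (fun i _ => hinner i),
          Finset.sum_eq_single m (fun i _ him => by
            rw [if_neg (fun h => him (le_antisymm h.1 h.2))])
            (fun h => absurd (mem_univ m) h)]
        simp
      rw [Finset.sum_congr rfl (fun i _ => Finset.sum_congr rfl (fun j _ => hsplit i j))]
      rw [Finset.sum_congr rfl (fun i _ => Finset.sum_add_distrib), Finset.sum_add_distrib]
      rw [hdiag]
      have h5 : (∑ x : Fin n, ∑ y : Fin n, if x ≤ m ∧ m ≤ y then cfree E x y else 0)
          = cov E m := by rw [hcov]
      rw [h5]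
      have := hcovle E m
      simp only
      omega
  have hFinj : Function.Injective F := by
    intro E E' hEE
    funext i j
    have hIlt : (i.1 : ℕ) < n := by omega
    have hJlt : q + j.1 < n := by omega
    have hval := congrFun (congrFun hEE ⟨i.1, hIlt⟩) ⟨q + j.1, hJlt⟩
    simp only [hF] at hval
    have hne : (⟨i.1, hIlt⟩ : Fin n) ≠ ⟨q + j.1, hJlt⟩ := by
      intro h
      have h2 : i.1 = q + j.1 := by
        have := congrArg Fin.val h
        simpa using this
      omega
    rw [if_neg hne, if_neg hne] at hval
    simp only [hcfree] at hval
    have hcond : ((⟨i.1, hIlt⟩ : Fin n) : ℕ) < q ∧ q ≤ ((⟨q + j.1, hJlt⟩ : Fin n) : ℕ)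
        ∧ ((⟨q + j.1, hJlt⟩ : Fin n) : ℕ) < 2*q := ⟨i.isLt, by simp, by simp; omega⟩
    rw [dif_pos hcond, dif_pos hcond] at hval
    have hi : (⟨((⟨i.1, hIlt⟩ : Fin n) : ℕ), hcond.1⟩ : Fin q) = i := by
      apply Fin.ext; rfl
    have hj : (⟨((⟨q + j.1, hJlt⟩ : Fin n) : ℕ) - q, by omega⟩ : Fin q) = j := by
      apply Fin.ext; simp
    rw [hi, hj] at hval
    have h2 : (E i j : ℕ) = (E' i j : ℕ) := by exact_mod_cast hval
    exact Fin.ext h2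
  have hKfin : {c : Fin n → Fin n → ℕ | IsKostant (fun _ : Fin n => n^2) c}.Finite :=
    finite_of_bdd _ (fun c hc i j => kostant_entry_bound hc i j)
  have hcount := ncard_ge_of_inj _ hKfin F (fun E => hmem E) hFinj
  have hcard : Fintype.card (Fin q → Fin q → Fin 2) = 2^(q*q) := by
    rw [Fintype.card_fun]
    rw [Fintype.card_fun]
    simp [Fintype.card_fin, ← pow_mul]
  rw [hcard] at hcount
  exact hcount

end part3

section part4
open Finset
variable {n : ℕ}

lemma tesler_wsumZ {A : Fin n → Fin n → ℕ}
    (hA : IsTesler (fun k : Fin n => ((k : ℕ) : ℤ) + 1) A) :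
    ∑ i : Fin n, ∑ j : Fin n,
      (if i = j then (n:ℤ) - i.1 else if i ≤ j then (j.1:ℤ) - i.1 else 0) * A i j
      = ∑ k : Fin n, ((n:ℤ) - k.1) * (k.1 + 1) := by
  classical
  have step1 : ∑ k : Fin n, ((n:ℤ) - k.1) * (k.1 + 1)
      = ∑ k : Fin n, (((n:ℤ) - k.1) * ∑ i : Fin n, (if k ≤ i then (A k i : ℤ) else 0)
        - ((n:ℤ) - k.1) * ∑ i : Fin n, (if i < k then (A i k : ℤ) else 0)) := by
    apply Finset.sum_congr rfl
    intro k _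
    rw [← mul_sub, hA.2 k]
  have step2 : ∀ k : Fin n, ((n:ℤ) - k.1) * ∑ i : Fin n, (if k ≤ i then (A k i : ℤ) else 0)
      = ∑ i : Fin n, (if k ≤ i then ((n:ℤ) - k.1) * A k i else 0) := by
    intro k
    rw [Finset.mul_sum]
    exact Finset.sum_congr rfl (fun i _ => by rw [mul_ite, mul_zero])
  have step3 : ∀ k : Fin n, ((n:ℤ) - k.1) * ∑ i : Fin n, (if i < k then (A i k : ℤ) else 0)
      = ∑ i : Fin n, (if i < k then ((n:ℤ) - k.1) * A i k else 0) := by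
    intro k
    rw [Finset.mul_sum]
    exact Finset.sum_congr rfl (fun i _ => by rw [mul_ite, mul_zero])
  have e1 : ∑ k : Fin n, ((n:ℤ) - k.1) * (k.1 + 1)
      = ∑ k : Fin n, (∑ i : Fin n, (if k ≤ i then ((n:ℤ) - k.1) * A k i else 0)
        - ∑ i : Fin n, (if i < k then ((n:ℤ) - k.1) * A i k else 0)) :=
    step1.trans (Finset.sum_congr rfl (fun k _ => by rw [step2 k, step3 k]))
  have e2 : ∑ k : Fin n, (∑ i : Fin n, (if k ≤ i then ((n:ℤ) - k.1) * A k i else 0)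
        - ∑ i : Fin n, (if i < k then ((n:ℤ) - k.1) * A i k else 0))
      = (∑ k : Fin n, ∑ i : Fin n, (if k ≤ i then ((n:ℤ) - k.1) * A k i else 0))
        - ∑ k : Fin n, ∑ i : Fin n, (if i < k then ((n:ℤ) - k.1) * A i k else 0) :=
    Finset.sum_sub_distrib _ _
  have e3 : ∑ k : Fin n, ∑ i : Fin n, (if i < k then ((n:ℤ) - k.1) * A i k else 0)
      = ∑ i : Fin n, ∑ k : Fin n, (if i < k then ((n:ℤ) - k.1) * A i k else 0) :=
    Finset.sum_comm
  have e4 : (∑ i : Fin n, ∑ j : Fin n, (if i ≤ j then ((n:ℤ) - i.1) * A i j else 0))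
        - (∑ i : Fin n, ∑ j : Fin n, (if i < j then ((n:ℤ) - j.1) * A i j else 0))
      = ∑ i : Fin n, ∑ j : Fin n, ((if i ≤ j then ((n:ℤ) - i.1) * A i j else 0)
        - (if i < j then ((n:ℤ) - j.1) * A i j else 0)) := by
    rw [← Finset.sum_sub_distrib]
    exact Finset.sum_congr rfl (fun i _ => (Finset.sum_sub_distrib _ _).symm)
  have e5 : ∑ i : Fin n, ∑ j : Fin n, ((if i ≤ j then ((n:ℤ) - i.1) * A i j else 0)
        - (if i < j then ((n:ℤ) - j.1) * A i j else 0))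
      = ∑ i : Fin n, ∑ j : Fin n,
        (if i = j then (n:ℤ) - i.1 else if i ≤ j then (j.1:ℤ) - i.1 else 0) * A i j := by
    apply Finset.sum_congr rfl; intro i _
    apply Finset.sum_congr rfl; intro j _
    rcases lt_trichotomy i j with h | h | h
    · rw [if_pos h.le, if_pos h, if_neg (Fin.ne_of_lt h), if_pos h.le]
      ring
    · subst h
      rw [if_pos (le_refl i), if_neg (lt_irrefl i), if_pos rfl]
      ring
    · rw [if_neg (not_le.2 h), if_neg (not_lt.2 h.le), if_neg (Fin.ne_of_gt h),
        if_neg (not_le.2 h)]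
      ring
  rw [e1, e2, e3, e4, e5]

lemma tesler_wsum {A : Fin n → Fin n → ℕ}
    (hA : IsTesler (fun k : Fin n => ((k : ℕ) : ℤ) + 1) A) :
    ∑ p ∈ univ.filter (fun p : Fin n × Fin n => p.1 ≤ p.2),
      (if p.1 = p.2 then n - p.1.1 else p.2.1 - p.1.1) * A p.1 p.2 ≤ n^3 := by
  classical
  have hZ := tesler_wsumZ hA
  have hcast : ((∑ p ∈ univ.filter (fun p : Fin n × Fin n => p.1 ≤ p.2),
        (if p.1 = p.2 then n - p.1.1 else p.2.1 - p.1.1) * A p.1 p.2 : ℕ) : ℤ)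
      = ∑ i : Fin n, ∑ j : Fin n,
        (if i = j then (n:ℤ) - i.1 else if i ≤ j then (j.1:ℤ) - i.1 else 0) * A i j := by
    calc ((∑ p ∈ univ.filter (fun p : Fin n × Fin n => p.1 ≤ p.2),
          (if p.1 = p.2 then n - p.1.1 else p.2.1 - p.1.1) * A p.1 p.2 : ℕ) : ℤ)
        = ∑ p ∈ univ.filter (fun p : Fin n × Fin n => p.1 ≤ p.2),
          (((if p.1 = p.2 then n - p.1.1 else p.2.1 - p.1.1) * A p.1 p.2 : ℕ) : ℤ) :=
          Nat.cast_sum _ _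
      _ = ∑ p : Fin n × Fin n,
          (((if p.1 = p.2 then n - p.1.1 else p.2.1 - p.1.1) * A p.1 p.2 : ℕ) : ℤ) := by
          apply Finset.sum_subset (Finset.filter_subset _ _)
          intro p _ hp
          rw [Finset.mem_filter] at hp
          push_neg at hp
          have hlt : p.2 < p.1 := hp (mem_univ p)
          rw [hA.1 p.1 p.2 hlt]
          simp
      _ = ∑ p : Fin n × Fin n,
          (if p.1 = p.2 then (n:ℤ) - p.1.1 else if p.1 ≤ p.2 then (p.2.1:ℤ) - p.1.1 else 0)
            * A p.1 p.2 := by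
          apply Finset.sum_congr rfl
          intro p _
          rcases le_or_gt p.1 p.2 with hle | hlt
          · rcases eq_or_lt_of_le hle with heq | hlt2
            · rw [if_pos heq, if_pos heq]
              have h1 : p.1.1 ≤ n := p.1.isLt.le
              push_cast [Nat.cast_sub h1]
              ring
            · have hne : p.1 ≠ p.2 := Fin.ne_of_lt hlt2
              rw [if_neg hne, if_neg hne, if_pos hle]
              have h1 : p.1.1 ≤ p.2.1 := hle
              push_cast [Nat.cast_sub h1]
              ring
          · have hne : p.1 ≠ p.2 := Fin.ne_of_gt hlt
            have h0 : A p.1 p.2 = 0 := hA.1 p.1 p.2 hlt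
            rw [if_neg hne, if_neg hne, if_neg (not_le.2 hlt), h0]
            simp
      _ = ∑ i : Fin n, ∑ j : Fin n,
          (if i = j then (n:ℤ) - i.1 else if i ≤ j then (j.1:ℤ) - i.1 else 0) * A i j :=
          Fintype.sum_prod_type
            (f := fun p : Fin n × Fin n =>
              (if p.1 = p.2 then (n:ℤ) - p.1.1 else if p.1 ≤ p.2 then (p.2.1:ℤ) - p.1.1 else 0)
                * A p.1 p.2)
  have hbound : ∑ k : Fin n, ((n:ℤ) - k.1) * (k.1 + 1) ≤ (n:ℤ)^3 := by
    calc ∑ k : Fin n, ((n:ℤ) - k.1) * (k.1 + 1) ≤ ∑ _k : Fin n, (n:ℤ) * n := by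
          apply Finset.sum_le_sum
          intro k _
          have h1 : (k.1 : ℤ) < n := by exact_mod_cast k.isLt
          have h2 : (0:ℤ) ≤ k.1 := by positivity
          nlinarith
      _ = (n:ℤ)^3 := by
          rw [Finset.sum_const, Finset.card_univ, Fintype.card_fin, nsmul_eq_mul]
          ring
  have : ((∑ p ∈ univ.filter (fun p : Fin n × Fin n => p.1 ≤ p.2),
      (if p.1 = p.2 then n - p.1.1 else p.2.1 - p.1.1) * A p.1 p.2 : ℕ) : ℤ)
      ≤ ((n^3 : ℕ) : ℤ) := by
    rw [hcast, hZ]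
    exact_mod_cast hbound
  exact_mod_cast this

lemma tesler_entry_bound {A : Fin n → Fin n → ℕ}
    (hA : IsTesler (fun k : Fin n => ((k : ℕ) : ℤ) + 1) A) (i j : Fin n) :
    A i j ≤ n^3 := by
  classical
  rcases le_or_gt i j with hle | hlt
  · have hw : 1 ≤ (if i = j then n - i.1 else j.1 - i.1) := by
      rcases eq_or_lt_of_le hle with heq | hlt2
      · rw [if_pos heq]
        have := i.isLt
        omega
      · rw [if_neg (Fin.ne_of_lt hlt2)]
        have : i.1 < j.1 := hlt2
        omega
    calc A i j ≤ (if i = j then n - i.1 else j.1 - i.1) * A i j :=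
          Nat.le_mul_of_pos_left _ (by omega)
      _ ≤ ∑ p ∈ univ.filter (fun p : Fin n × Fin n => p.1 ≤ p.2),
          (if p.1 = p.2 then n - p.1.1 else p.2.1 - p.1.1) * A p.1 p.2 := by
          exact Finset.single_le_sum
            (f := fun p : Fin n × Fin n =>
              (if p.1 = p.2 then n - p.1.1 else p.2.1 - p.1.1) * A p.1 p.2)
            (fun _ _ => Nat.zero_le _) (Finset.mem_filter.2 ⟨mem_univ (i, j), hle⟩)
      _ ≤ n^3 := tesler_wsum hA
  · rw [hA.1 i j hlt]
    exact Nat.zero_le _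

lemma tesler_upper (hn : 1 ≤ n) :
    Real.log (Set.ncard {A : Fin n → Fin n → ℕ |
      IsTesler (fun k : Fin n => ((k : ℕ) : ℤ) + 1) A}) ≤ 3 * n^2 := by
  classical
  apply upper_main hn _ (fun i j => if i = j then n - i.1 else j.1 - i.1)
  · intro i j hij
    rcases eq_or_lt_of_le hij with heq | hlt
    · rw [if_pos heq]; have := i.isLt; omega
    · rw [if_neg (Fin.ne_of_lt hlt)]; have : i.1 < j.1 := hlt; omega
  · intro i j hij
    split
    · omega
    · have := j.isLt; omega
  · intro i j₁ j₂ h1 h2 h3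
    have e1 : i.1 ≤ j₁.1 := h1
    have e2 : i.1 ≤ j₂.1 := h2
    have l1 := i.isLt
    have l2 := j₁.isLt
    have l3 := j₂.isLt
    apply Fin.ext
    by_cases c1 : i = j₁ <;> by_cases c2 : i = j₂
    · rw [← c1, ← c2]
    · rw [if_pos c1, if_neg c2] at h3
      have : i.1 ≠ j₂.1 := fun h => c2 (Fin.ext h)
      omega
    · rw [if_neg c1, if_pos c2] at h3
      have : i.1 ≠ j₁.1 := fun h => c1 (Fin.ext h)
      omega
    · rw [if_neg c1, if_neg c2] at h3
      have : i.1 ≠ j₁.1 := fun h => c1 (Fin.ext h)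
      have : i.1 ≠ j₂.1 := fun h => c2 (Fin.ext h)
      omega
  · intro A hA i j hji
    exact hA.1 i j hji
  · intro A hA
    exact tesler_wsum hA

end part4

section part5
open Finset
variable {n : ℕ}

lemma tesler_lower (q : ℕ) (hq1 : 1 ≤ q) (hq : 3*q ≤ n) :
    2^(q*q) ≤ Set.ncard {A : Fin n → Fin n → ℕ |
      IsTesler (fun k : Fin n => ((k : ℕ) : ℤ) + 1) A} := by
  classical
  set bits : (Fin q → Fin q → Fin 2) → Fin n → Fin n → ℕ :=
    fun E i j => if h : q ≤ i.1 ∧ i.1 < 2*q ∧ 2*q ≤ j.1 ∧ j.1 < 3*q then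
      (E ⟨i.1 - q, by omega⟩ ⟨j.1 - 2*q, by omega⟩ : ℕ) else 0 with hbits
  set R : (Fin q → Fin q → Fin 2) → Fin n → ℕ :=
    fun E k => ∑ j : Fin n, bits E k j with hR
  set C : (Fin q → Fin q → Fin 2) → Fin n → ℕ :=
    fun E k => ∑ i : Fin n, bits E i k with hC
  have hbits1 : ∀ E i j, bits E i j ≤ 1 := by
    intro E i j
    simp only [hbits]
    split
    · exact Nat.lt_succ_iff.1 (Fin.isLt _)
    · exact Nat.zero_le _
  have hbitsdom : ∀ E (i j : Fin n), bits E i j ≠ 0 →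
      q ≤ i.1 ∧ i.1 < 2*q ∧ 2*q ≤ j.1 ∧ j.1 < 3*q := by
    intro E i j hne
    by_contra hcon
    apply hne
    simp only [hbits]
    rw [dif_neg hcon]
  have hcount : ∑ j : Fin n, (if 2*q ≤ j.1 ∧ j.1 < 3*q then 1 else 0) = q := by
    rw [Fin.sum_univ_eq_sum_range (fun t => if 2*q ≤ t ∧ t < 3*q then 1 else 0) n]
    calc ∑ t ∈ range n, (if 2*q ≤ t ∧ t < 3*q then 1 else 0)
        = ∑ _t ∈ (range n).filter (fun t => 2*q ≤ t ∧ t < 3*q), 1 :=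
          (Finset.sum_filter _ _).symm
      _ = ((range n).filter (fun t => 2*q ≤ t ∧ t < 3*q)).card := by
          rw [Finset.sum_const, smul_eq_mul, mul_one]
      _ = (Finset.Ico (2*q) (3*q)).card := by
          congr 1
          ext t
          simp only [Finset.mem_filter, Finset.mem_range, Finset.mem_Ico]
          omega
      _ = q := by rw [Nat.card_Ico]; omega
  have hRq : ∀ E k, R E k ≤ q := by
    intro E k
    rw [hR]
    calc ∑ j : Fin n, bits E k j
        ≤ ∑ j : Fin n, (if 2*q ≤ j.1 ∧ j.1 < 3*q then 1 else 0) := by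
          apply Finset.sum_le_sum
          intro j _
          rcases Nat.eq_zero_or_pos (bits E k j) with h0 | hpos
          · rw [h0]; exact Nat.zero_le _
          · have hcond := hbitsdom E k j (by omega)
            rw [if_pos ⟨hcond.2.2.1, hcond.2.2.2⟩]
            exact hbits1 E k j
      _ = q := hcount
  have hRk : ∀ E (k : Fin n), R E k ≤ k.1 + 1 := by
    intro E k
    rcases lt_or_ge k.1 q with h | h
    · have : R E k = 0 := by
        rw [hR]
        apply Finset.sum_eq_zero
        intro j _
        rcases Nat.eq_zero_or_pos (bits E k j) with h0 | hpos
        · exact h0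
        · have hcond := hbitsdom E k j (by omega)
          omega
      omega
    · have := hRq E k
      omega
  set D : (Fin q → Fin q → Fin 2) → Fin n → ℕ :=
    fun E k => k.1 + 1 + C E k - R E k with hD
  have hDcast : ∀ E (k : Fin n), (D E k : ℤ) = (k.1 : ℤ) + 1 + C E k - R E k := by
    intro E k
    rw [hD]
    simp only
    have h1 := hRk E k
    push_cast [Nat.cast_sub (by omega : R E k ≤ k.1 + 1 + C E k)]
    ring
  set A : (Fin q → Fin q → Fin 2) → Fin n → Fin n → ℕ :=
    fun E i j => bits E i j + (if i = j then D E i else 0) with hA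
  have hmem : ∀ E, IsTesler (fun k : Fin n => ((k : ℕ) : ℤ) + 1) (A E) := by
    intro E
    constructor
    · intro i j hji
      simp only [hA]
      have h1 : bits E i j = 0 := by
        rcases Nat.eq_zero_or_pos (bits E i j) with h0 | hpos
        · exact h0
        · have hcond := hbitsdom E i j (by omega)
          have : j.1 < i.1 := hji
          omega
      rw [h1, if_neg (by intro h; rw [h] at hji; exact lt_irrefl _ hji)]
    · intro k
      have hsplit1 : ∀ i : Fin n, (if k ≤ i then (A E k i : ℤ) else 0)
          = (if k ≤ i then (bits E k i : ℤ) else 0)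
            + (if k ≤ i then (if k = i then (D E k : ℤ) else 0) else 0) := by
        intro i
        simp only [hA]
        split <;> push_cast <;> ring
      have hsplit2 : ∀ i : Fin n, (if i < k then (A E i k : ℤ) else 0)
          = (if i < k then (bits E i k : ℤ) else 0)
            + (if i < k then (if i = k then (D E i : ℤ) else 0) else 0) := by
        intro i
        simp only [hA]
        split <;> push_cast <;> ring
      rw [Finset.sum_congr rfl (fun i _ => hsplit1 i),
        Finset.sum_congr rfl (fun i _ => hsplit2 i),
        Finset.sum_add_distrib, Finset.sum_add_distrib]
      have hrow : ∑ i : Fin n, (if k ≤ i then (bits E k i : ℤ) else 0)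
          = (R E k : ℤ) := by
        rw [hR]
        simp only
        push_cast
        apply Finset.sum_congr rfl
        intro i _
        split
        · rfl
        · rcases Nat.eq_zero_or_pos (bits E k i) with h0 | hpos
          · rw [h0]; simp
          · have hcond := hbitsdom E k i (by omega)
            rename_i hki
            exact absurd (show k ≤ i from Fin.le_def.2 (by omega)) hki
      have hcol : ∑ i : Fin n, (if i < k then (bits E i k : ℤ) else 0)
          = (C E k : ℤ) := by
        rw [hC]
        simp only
        push_cast
        apply Finset.sum_congr rfl
        intro i _
        split
        · rfl
        · rcases Nat.eq_zero_or_pos (bits E i k) with h0 | hpos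
          · rw [h0]; simp
          · have hcond := hbitsdom E i k (by omega)
            rename_i hik
            exact absurd (show i < k from Fin.lt_def.2 (by omega)) hik
      have hdiag1 : ∑ i : Fin n, (if k ≤ i then (if k = i then (D E k : ℤ) else 0) else 0)
          = (D E k : ℤ) := by
        rw [Finset.sum_eq_single k (fun i _ hik => by
          split_ifs with h1 h2
          · exact absurd h2.symm hik
          · rfl
          · rfl) (fun h => absurd (mem_univ k) h)]
        simp
      have hdiag2 : ∑ i : Fin n, (if i < k then (if i = k then (D E i : ℤ) else 0) else 0)
          = 0 := by
        apply Finset.sum_eq_zero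
        intro i _
        split_ifs with h1 h2
        · exact absurd h2 (Fin.ne_of_lt h1)
        · rfl
        · rfl
      rw [hrow, hcol, hdiag1, hdiag2, hDcast E k]
      push_cast
      ring
  have hFinj : Function.Injective A := by
    intro E E' hEE
    funext i j
    have hIlt : q + i.1 < n := by omega
    have hJlt : 2*q + j.1 < n := by omega
    have hval := congrFun (congrFun hEE ⟨q + i.1, hIlt⟩) ⟨2*q + j.1, hJlt⟩
    simp only [hA] at hval
    have hne : (⟨q + i.1, hIlt⟩ : Fin n) ≠ ⟨2*q + j.1, hJlt⟩ := by
      intro h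
      have h2 : q + i.1 = 2*q + j.1 := by
        have := congrArg Fin.val h
        simpa using this
      omega
    rw [if_neg hne, if_neg hne] at hval
    simp only [hbits] at hval
    have hcond : q ≤ ((⟨q + i.1, hIlt⟩ : Fin n) : ℕ) ∧ ((⟨q + i.1, hIlt⟩ : Fin n) : ℕ) < 2*q
        ∧ 2*q ≤ ((⟨2*q + j.1, hJlt⟩ : Fin n) : ℕ) ∧ ((⟨2*q + j.1, hJlt⟩ : Fin n) : ℕ) < 3*q := by
      refine ⟨by simp, by simp; omega, by simp, by simp; omega⟩
    rw [dif_pos hcond, dif_pos hcond] at hval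
    have hi : (⟨((⟨q + i.1, hIlt⟩ : Fin n) : ℕ) - q, by omega⟩ : Fin q) = i := by
      apply Fin.ext; simp
    have hj : (⟨((⟨2*q + j.1, hJlt⟩ : Fin n) : ℕ) - 2*q, by omega⟩ : Fin q) = j := by
      apply Fin.ext; simp
    rw [hi, hj] at hval
    have h2 : (E i j : ℕ) = (E' i j : ℕ) := by exact_mod_cast hval
    exact Fin.ext h2
  have hTfin : {A : Fin n → Fin n → ℕ |
      IsTesler (fun k : Fin n => ((k : ℕ) : ℤ) + 1) A}.Finite :=
    finite_of_bdd _ (fun B hB i j => tesler_entry_bound hB i j)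
  have hcount2 := ncard_ge_of_inj _ hTfin A (fun E => hmem E) hFinj
  have hcard : Fintype.card (Fin q → Fin q → Fin 2) = 2^(q*q) := by
    rw [Fintype.card_fun, Fintype.card_fun]
    simp [Fintype.card_fin, ← pow_mul]
  rw [hcard] at hcount2
  exact hcount2

end part5


/-- `L(1,2,…,n) ≍ L[n²,n]`. -/
theorem L_onetoN_asymp_Lbox :
    ∃ a b : ℝ, 0 < a ∧ a ≤ b ∧ ∀ᶠ n : ℕ in atTop,
      a * Lbox (n ^ 2) n ≤ LTes (fun k : Fin n => ((k : ℕ) : ℤ) + 1) ∧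
      LTes (fun k : Fin n => ((k : ℕ) : ℤ) + 1) ≤ b * Lbox (n ^ 2) n := by
  refine ⟨1/300, 100, by norm_num, by norm_num, ?_⟩
  rw [Filter.eventually_atTop]
  refine ⟨8, ?_⟩
  intro n hn
  have hq1 : 1 ≤ n/4 := by omega
  have hq3 : 3*(n/4) ≤ n := by omega
  have hq8 : n ≤ 8*(n/4) := by omega
  have hr1 : 1 ≤ n/2 := by omega
  have hr2 : 2*(n/2) ≤ n := by omega
  have hr4 : n ≤ 4*(n/2) := by omega
  have hn1 : 1 ≤ n := by omega
  have hlog2 : (0.64:ℝ) ≤ Real.log 2 := by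
    have := Real.log_two_gt_d9
    norm_num at this ⊢
    linarith
  have hlog2' : Real.log 2 ≤ 1 := by
    have := Real.log_le_sub_one_of_pos (by norm_num : (0:ℝ) < 2)
    linarith
  -- upper bounds
  have hKup : Lbox (n^2) n ≤ 3*(n:ℝ)^2 := by
    simp only [Lbox]
    exact kostant_upper hn1
  have hTup : LTes (fun k : Fin n => ((k : ℕ) : ℤ) + 1) ≤ 3*(n:ℝ)^2 := by
    simp only [LTes]
    exact tesler_upper hn1
  -- lower bounds
  have hKlow : ((n/2 * (n/2) : ℕ):ℝ) * Real.log 2 ≤ Lbox (n^2) n := by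
    simp only [Lbox, KPF]
    have h1 : (2:ℝ)^(n/2 * (n/2)) ≤
        ((Set.ncard {c : Fin n → Fin n → ℕ | IsKostant (fun _ : Fin n => n^2) c} : ℕ) : ℝ) := by
      exact_mod_cast kostant_lower (n/2) hr1 hr2
    have h2 := Real.log_le_log (by positivity) h1
    rwa [Real.log_pow] at h2
  have hTlow : ((n/4 * (n/4) : ℕ):ℝ) * Real.log 2
      ≤ LTes (fun k : Fin n => ((k : ℕ) : ℤ) + 1) := by
    simp only [LTes]
    have h1 : (2:ℝ)^(n/4 * (n/4)) ≤
        ((Set.ncard {A : Fin n → Fin n → ℕ |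
          IsTesler (fun k : Fin n => ((k : ℕ) : ℤ) + 1) A} : ℕ) : ℝ) := by
      exact_mod_cast tesler_lower (n/4) hq1 hq3
    have h2 := Real.log_le_log (by positivity) h1
    rwa [Real.log_pow] at h2
  have hqR : (n:ℝ) ≤ 8 * ((n/4 : ℕ):ℝ) := by exact_mod_cast hq8
  have hrR : (n:ℝ) ≤ 4 * ((n/2 : ℕ):ℝ) := by exact_mod_cast hr4
  have hqq : ((n/4 * (n/4) : ℕ):ℝ) = ((n/4 : ℕ):ℝ) * ((n/4 : ℕ):ℝ) := by push_cast; ring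
  have hrr : ((n/2 * (n/2) : ℕ):ℝ) = ((n/2 : ℕ):ℝ) * ((n/2 : ℕ):ℝ) := by push_cast; ring
  rw [hqq] at hTlow
  rw [hrr] at hKlow
  have hnR : (0:ℝ) ≤ (n:ℝ) := by positivity
  constructor
  · calc (1/300 : ℝ) * Lbox (n^2) n ≤ (1/300) * (3*(n:ℝ)^2) := by linarith
      _ ≤ ((n/4 : ℕ):ℝ) * ((n/4 : ℕ):ℝ) * Real.log 2 := by nlinarith
      _ ≤ LTes (fun k : Fin n => ((k : ℕ) : ℤ) + 1) := hTlow
  · calc LTes (fun k : Fin n => ((k : ℕ) : ℤ) + 1) ≤ 3*(n:ℝ)^2 := hTup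
      _ ≤ 100 * (((n/2 : ℕ):ℝ) * ((n/2 : ℕ):ℝ) * Real.log 2) := by nlinarith
      _ ≤ 100 * Lbox (n^2) n := by linarith
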